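/- Rank obstruction on a fixed iso-purity manifold: let p, q : Fin d → ℝ be probability vectors such that (i) the number of indices i with p i ≠ 0 equals the number of indices with q i ≠ 0, (ii) ∑ i, (p i)^2 = ∑ i, (q i)^2, and (iii) for all 0 < α < β, S α p - S β p ≤ S α q - S β q. Then q is a permutation of p: there exists σ : Equiv.Perm (Fin d) with q i = p (σ i) for all i. -/

import Mathlib

open Finset Filter Topology

/-- Rényi entropy of a probability vector `p` on `Fin d`
(Shannon entropy at `α = 1`; powers are `Real.rpow`). -/
noncomputable def S {d : ℕ} (α : ℝ) (p : Fin d → ℝ) : ℝ :=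
  if α = 1 then -(∑ i, p i * Real.log (p i))
  else (1 - α)⁻¹ * Real.log (∑ i, (p i) ^ α)

lemma sum_rpow_pos {d : ℕ} {p : Fin d → ℝ} (hp0 : ∀ i, 0 ≤ p i) (hp1 : ∑ i, p i = 1)
    {α : ℝ} (hα : 0 < α) : 0 < ∑ i, p i ^ α := by
  have h1 : ∃ i, p i ≠ 0 := by
    by_contra h; push_neg at h; simp [h] at hp1
  obtain ⟨i, hi⟩ := h1
  refine Finset.sum_pos' (fun j _ => Real.rpow_nonneg (hp0 j) α) ?_
  exact ⟨i, Finset.mem_univ i, Real.rpow_pos_of_pos (lt_of_le_of_ne (hp0 i) (Ne.symm hi)) α⟩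

lemma card_supp_pos {d : ℕ} {p : Fin d → ℝ} (hp1 : ∑ i, p i = 1) :
    0 < (Finset.univ.filter fun i => p i ≠ 0).card := by
  rw [Finset.card_pos]
  by_contra h
  rw [Finset.not_nonempty_iff_eq_empty, Finset.filter_eq_empty_iff] at h
  push_neg at h
  have h0 : ∑ i, p i = 0 := Finset.sum_eq_zero fun i _ => h (Finset.mem_univ i)
  rw [hp1] at h0; norm_num at h0

lemma tendsto_sum_rpow_zero {d : ℕ} (p : Fin d → ℝ) :
    Tendsto (fun α : ℝ => ∑ i, p i ^ α) (𝓝[>] (0:ℝ))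
      (𝓝 ((Finset.univ.filter fun i => p i ≠ 0).card : ℝ)) := by
  have hcard : ((Finset.univ.filter fun i => p i ≠ 0).card : ℝ)
      = ∑ i : Fin d, (if p i ≠ 0 then (1:ℝ) else 0) := by
    rw [Finset.sum_ite, Finset.sum_const, Finset.sum_const]
    simp
  rw [hcard]
  refine tendsto_finset_sum _ fun i _ => ?_
  by_cases hi : p i = 0
  · simp only [hi, if_neg (by simp : ¬ (0:ℝ) ≠ 0)]
    have : ∀ᶠ α : ℝ in 𝓝[>] 0, (0:ℝ) ^ α = 0 := by
      filter_upwards [self_mem_nhdsWithin] with α hα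
      exact Real.zero_rpow (ne_of_gt hα)
    exact Tendsto.congr' (this.mono fun a ha => ha.symm) tendsto_const_nhds
  · simp only [if_pos hi]
    have h := (Real.continuousAt_const_rpow (a := p i) (b := 0) hi).tendsto
    rw [Real.rpow_zero] at h
    exact h.mono_left nhdsWithin_le_nhds

lemma tendsto_S_zero {d : ℕ} {p : Fin d → ℝ} (hp0 : ∀ i, 0 ≤ p i) (hp1 : ∑ i, p i = 1) :
    Tendsto (fun α => S α p) (𝓝[>] (0:ℝ))
      (𝓝 (Real.log ((Finset.univ.filter fun i => p i ≠ 0).card : ℝ))) := by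
  have hr : (0:ℝ) < ((Finset.univ.filter fun i => p i ≠ 0).card : ℝ) := by
    exact_mod_cast card_supp_pos hp1
  have h1 : Tendsto (fun α : ℝ => (1 - α)⁻¹ * Real.log (∑ i, p i ^ α)) (𝓝[>] (0:ℝ))
      (𝓝 (Real.log ((Finset.univ.filter fun i => p i ≠ 0).card : ℝ))) := by
    have ha : Tendsto (fun α : ℝ => (1 - α)⁻¹) (𝓝[>] (0:ℝ)) (𝓝 1) := by
      have : ContinuousAt (fun α : ℝ => (1 - α)⁻¹) 0 := by
        exact (continuousAt_const.sub continuousAt_id).inv₀ (by norm_num)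
      have h := this.tendsto
      norm_num at h
      exact h.mono_left nhdsWithin_le_nhds
    have hb : Tendsto (fun α : ℝ => Real.log (∑ i, p i ^ α)) (𝓝[>] (0:ℝ))
        (𝓝 (Real.log ((Finset.univ.filter fun i => p i ≠ 0).card : ℝ))) :=
      (Real.continuousAt_log (ne_of_gt hr)).tendsto.comp (tendsto_sum_rpow_zero p)
    simpa using ha.mul hb
  refine Tendsto.congr' ?_ h1
  filter_upwards [Ioo_mem_nhdsGT_of_mem ⟨le_refl (0:ℝ), one_pos⟩] with α hα
  rw [S, if_neg (ne_of_lt hα.2)]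

lemma sums_eq {d : ℕ} {p q : Fin d → ℝ}
    (hp0 : ∀ i, 0 ≤ p i) (hp1 : ∑ i, p i = 1)
    (hq0 : ∀ i, 0 ≤ q i) (hq1 : ∑ i, q i = 1)
    (hrank : (Finset.univ.filter fun i => p i ≠ 0).card =
      (Finset.univ.filter fun i => q i ≠ 0).card)
    (hpur : ∑ i, (p i) ^ 2 = ∑ i, (q i) ^ 2)
    (hspread : ∀ α β : ℝ, 0 < α → α < β → S α p - S β p ≤ S α q - S β q)
    {α : ℝ} (hα0 : 0 < α) (hα1 : α < 1) :
    ∑ i, p i ^ α = ∑ i, q i ^ α := by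
  have hrpow2 : ∀ z : ℝ, z ^ (2:ℝ) = z ^ 2 := fun z => by
    rw [show (2:ℝ) = ((2:ℕ):ℝ) by norm_num, Real.rpow_natCast]
  have h2 : S 2 p = S 2 q := by
    rw [S, S, if_neg (by norm_num : (2:ℝ) ≠ 1), if_neg (by norm_num : (2:ℝ) ≠ 1)]
    simp only [hrpow2]
    rw [hpur]
  have hle : S α p - S α q ≤ 0 := by
    have := hspread α 2 hα0 (by linarith)
    linarith
  have hge : 0 ≤ S α p - S α q := by
    have hten : Tendsto (fun β => S β p - S β q) (𝓝[>] (0:ℝ)) (𝓝 0) := by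
      have h := (tendsto_S_zero hp0 hp1).sub (tendsto_S_zero hq0 hq1)
      rw [hrank, sub_self] at h
      exact h
    refine le_of_tendsto hten ?_
    filter_upwards [Ioo_mem_nhdsGT_of_mem ⟨le_refl (0:ℝ), hα0⟩] with β hβ
    have := hspread β α hβ.1 hβ.2
    linarith
  have hSeq : S α p = S α q := by linarith
  rw [S, S, if_neg (ne_of_lt hα1), if_neg (ne_of_lt hα1)] at hSeq
  have h1α : (1 - α) ≠ 0 := by intro h; exact (ne_of_lt hα1) (by linarith)
  have hlog := mul_left_cancel₀ (inv_ne_zero h1α) hSeq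
  exact Real.log_injOn_pos (Set.mem_Ioi.2 (sum_rpow_pos hp0 hp1 hα0))
    (Set.mem_Ioi.2 (sum_rpow_pos hq0 hq1 hα0)) hlog


lemma multiset_eq_of_powersums {d : ℕ} {x y : Fin d → ℝ}
    (hsupp : (Finset.univ.filter fun i => x i ≠ 0).card =
      (Finset.univ.filter fun i => y i ≠ 0).card)
    (hpow : ∀ k : ℕ, 1 ≤ k → k ≤ 2*d → ∑ i, x i ^ k = ∑ i, y i ^ k) :
    Multiset.map y Finset.univ.val = Multiset.map x Finset.univ.val := by
  classical
  set T : Finset ℝ := (Finset.univ.image x ∪ Finset.univ.image y).erase 0 with hT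
  have hT0 : ∀ t ∈ T, t ≠ 0 := fun t ht => (Finset.mem_erase.1 ht).1
  have hm : T.card ≤ 2 * d := by
    calc T.card ≤ (Finset.univ.image x ∪ Finset.univ.image y).card := Finset.card_erase_le
      _ ≤ (Finset.univ.image x).card + (Finset.univ.image y).card := Finset.card_union_le _ _
      _ ≤ Finset.univ.card + Finset.univ.card :=
          Nat.add_le_add (Finset.card_image_le) (Finset.card_image_le)
      _ = 2 * d := by simp [Finset.card_univ]; ring
  -- fiberwise counting
  have key : ∀ (z : Fin d → ℝ), (∀ i, z i ≠ 0 → z i ∈ T) → ∀ k : ℕ,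
      ∑ t ∈ T, ((Finset.univ.filter fun i => z i = t).card : ℝ) * t ^ k
        = ∑ i ∈ Finset.univ.filter (fun i => z i ≠ 0), z i ^ k := by
    intro z hz k
    rw [← Finset.sum_fiberwise_of_maps_to
      (g := z) (fun i hi => hz i (Finset.mem_filter.1 hi).2) (fun i => z i ^ k)]
    refine Finset.sum_congr rfl fun t ht => ?_
    have hfil : (Finset.univ.filter fun i => z i ≠ 0).filter (fun i => z i = t)
        = Finset.univ.filter fun i => z i = t := by
      rw [Finset.filter_filter]
      apply Finset.filter_congr
      intro i _
      constructor
      · exact fun h => h.2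
      · exact fun h => ⟨by rw [h]; exact hT0 t ht, h⟩
    rw [hfil]
    rw [Finset.sum_congr rfl (fun i hi => by rw [(Finset.mem_filter.1 hi).2])]
    rw [Finset.sum_const, nsmul_eq_mul]
  have hzx : ∀ i, x i ≠ 0 → x i ∈ T := fun i hi =>
    Finset.mem_erase.2 ⟨hi, Finset.mem_union_left _ (Finset.mem_image_of_mem x (Finset.mem_univ i))⟩
  have hzy : ∀ i, y i ≠ 0 → y i ∈ T := fun i hi =>
    Finset.mem_erase.2 ⟨hi, Finset.mem_union_right _ (Finset.mem_image_of_mem y (Finset.mem_univ i))⟩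
  set c : ℝ → ℝ := fun t => ((Finset.univ.filter fun i => x i = t).card : ℝ)
    - ((Finset.univ.filter fun i => y i = t).card : ℝ) with hc
  have heqs : ∀ k : ℕ, k < T.card → ∑ t ∈ T, c t * t ^ k = 0 := by
    intro k hk
    have hsplit : ∑ t ∈ T, c t * t ^ k
        = (∑ i ∈ Finset.univ.filter (fun i => x i ≠ 0), x i ^ k)
          - (∑ i ∈ Finset.univ.filter (fun i => y i ≠ 0), y i ^ k) := by
      rw [← key x hzx k, ← key y hzy k, ← Finset.sum_sub_distrib]
      exact Finset.sum_congr rfl fun t _ => by rw [hc]; ring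
    rw [hsplit]
    rcases Nat.eq_zero_or_pos k with hk0 | hk1
    · subst hk0
      simp only [pow_zero]
      rw [Finset.sum_const, Finset.sum_const, hsupp, sub_self]
    · have hk2 : k ≤ 2 * d := le_trans (le_of_lt hk) hm
      have hx' : ∑ i ∈ Finset.univ.filter (fun i => x i ≠ 0), x i ^ k = ∑ i, x i ^ k :=
        Finset.sum_filter_of_ne fun i _ h => fun h0 => h (by rw [h0, zero_pow (by omega : k ≠ 0)])
      have hy' : ∑ i ∈ Finset.univ.filter (fun i => y i ≠ 0), y i ^ k = ∑ i, y i ^ k :=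
        Finset.sum_filter_of_ne fun i _ h => fun h0 => h (by rw [h0, zero_pow (by omega : k ≠ 0)])
      rw [hx', hy', hpow k hk1 hk2, sub_self]
  -- Vandermonde
  have hcT : ∀ t ∈ T, c t = 0 := by
    intro t ht
    have e := T.orderIsoOfFin (rfl : T.card = T.card)
    set v : Fin T.card → ℝ := fun j => (e j : ℝ) with hv
    have hvinj : Function.Injective v := fun a b hab =>
      e.injective (Subtype.ext hab)
    have hzero : (fun j => c (v j)) = 0 := by
      apply Matrix.eq_zero_of_forall_pow_sum_mul_pow_eq_zero hvinj
      intro k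
      have : ∑ j : Fin T.card, c (v j) * v j ^ (k : ℕ)
          = ∑ t ∈ T, c t * t ^ (k : ℕ) := by
        rw [← Finset.sum_coe_sort T (fun t => c t * t ^ (k:ℕ))]
        exact Fintype.sum_equiv e.toEquiv _ _ (fun j => rfl)
      rw [this]
      exact heqs k k.isLt
    obtain ⟨j, hj⟩ := e.surjective ⟨t, ht⟩
    have := congrFun hzero j
    simpa [hv, hj] using this
  -- counts equal everywhere
  have hcount : ∀ t : ℝ, (Finset.univ.filter fun i => x i = t).card
      = (Finset.univ.filter fun i => y i = t).card := by
    intro t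
    by_cases ht : t ∈ T
    · have := hcT t ht
      rw [hc] at this
      have := sub_eq_zero.1 this
      exact_mod_cast this
    · by_cases ht0 : t = 0
      · subst ht0
        have hx' := Finset.card_filter_add_card_filter_not
          (s := Finset.univ) (p := fun i => x i = 0)
        have hy' := Finset.card_filter_add_card_filter_not
          (s := Finset.univ) (p := fun i => y i = 0)
        have hxne : (Finset.univ.filter fun i => ¬ x i = 0).card
            = (Finset.univ.filter fun i => ¬ y i = 0).card := hsupp
        omega
      · have hx0 : (Finset.univ.filter fun i => x i = t) = ∅ := by
          rw [Finset.filter_eq_empty_iff]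
          intro i _ hit
          exact ht (hit ▸ hzx i (by rw [hit]; exact ht0))
        have hy0 : (Finset.univ.filter fun i => y i = t) = ∅ := by
          rw [Finset.filter_eq_empty_iff]
          intro i _ hit
          exact ht (hit ▸ hzy i (by rw [hit]; exact ht0))
        rw [hx0, hy0]
  -- conclude multiset equality
  apply Multiset.ext.2
  intro t
  rw [Multiset.count_map, Multiset.count_map]
  have hcnt : ∀ z : Fin d → ℝ, (Multiset.filter (fun a => t = z a) Finset.univ.val).card
      = (Finset.univ.filter fun i => z i = t).card := by
    intro z
    rw [show (Finset.univ.filter fun i => z i = t) = Finset.univ.filter (fun a => t = z a) from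
      Finset.filter_congr fun i _ => eq_comm]
    rfl
  rw [hcnt x, hcnt y, hcount]


lemma exists_perm_of_multiset_map_eq {d : ℕ} {f g : Fin d → ℝ}
    (h : Multiset.map g Finset.univ.val = Multiset.map f Finset.univ.val) :
    ∃ σ : Equiv.Perm (Fin d), ∀ i, g i = f (σ i) := by
  have hlist : (List.ofFn g).Perm (List.ofFn f) := by
    rw [← Multiset.coe_eq_coe]
    simpa [List.ofFn_eq_map] using h
  have h2 : (g ∘ Tuple.sort g) = (f ∘ Tuple.sort f) := by
    apply List.ofFn_injective
    refine List.Perm.eq_of_pairwise' (r := (· ≤ ·)) ?_ ?_ ?_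
    rotate_right
    · exact ((Tuple.sort g).ofFn_comp_perm g).trans (hlist.trans ((Tuple.sort f).ofFn_comp_perm f).symm)
    · exact (Tuple.monotone_sort g).sortedLE_ofFn.pairwise
    · exact (Tuple.monotone_sort f).sortedLE_ofFn.pairwise
  refine ⟨(Tuple.sort g).symm.trans (Tuple.sort f), fun i => ?_⟩
  have := congrFun h2 ((Tuple.sort g).symm i)
  simpa using this


/-- Rank obstruction on a fixed iso-purity manifold. -/
theorem rank_obstruction_iso_purity {d : ℕ} (p q : Fin d → ℝ)
    (hp0 : ∀ i, 0 ≤ p i) (hp1 : ∑ i, p i = 1)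
    (hq0 : ∀ i, 0 ≤ q i) (hq1 : ∑ i, q i = 1)
    (hrank : (Finset.univ.filter fun i => p i ≠ 0).card =
      (Finset.univ.filter fun i => q i ≠ 0).card)
    (hpur : ∑ i, (p i) ^ 2 = ∑ i, (q i) ^ 2)
    (hspread : ∀ α β : ℝ, 0 < α → α < β → S α p - S β p ≤ S α q - S β q) :
    ∃ σ : Equiv.Perm (Fin d), ∀ i, q i = p (σ i) := by
  classical
  set γ : ℝ := (2 * (d:ℝ) + 1)⁻¹ with hγ
  have hd0 : (0:ℝ) ≤ 2 * (d:ℝ) := by positivity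
  have hγ0 : 0 < γ := by rw [hγ]; positivity
  have hγne : γ ≠ 0 := ne_of_gt hγ0
  set x : Fin d → ℝ := fun i => p i ^ γ with hx
  set y : Fin d → ℝ := fun i => q i ^ γ with hy
  -- supports coincide
  have hsx : (Finset.univ.filter fun i => x i ≠ 0) = (Finset.univ.filter fun i => p i ≠ 0) := by
    apply Finset.filter_congr
    intro i _
    rw [hx]
    simp only [ne_eq]
    rw [Real.rpow_eq_zero (hp0 i) hγne]
  have hsy : (Finset.univ.filter fun i => y i ≠ 0) = (Finset.univ.filter fun i => q i ≠ 0) := by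
    apply Finset.filter_congr
    intro i _
    rw [hy]
    simp only [ne_eq]
    rw [Real.rpow_eq_zero (hq0 i) hγne]
  have hsupp : (Finset.univ.filter fun i => x i ≠ 0).card =
      (Finset.univ.filter fun i => y i ≠ 0).card := by rw [hsx, hsy]; exact hrank
  -- power sums coincide
  have hpow : ∀ k : ℕ, 1 ≤ k → k ≤ 2*d → ∑ i, x i ^ k = ∑ i, y i ^ k := by
    intro k hk1 hk2
    have hα0 : 0 < γ * k := by
      apply mul_pos hγ0
      exact_mod_cast Nat.lt_of_lt_of_le Nat.zero_lt_one hk1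
    have hα1 : γ * k < 1 := by
      rw [hγ, inv_mul_lt_iff₀ (by positivity)]
      have : (k:ℝ) ≤ 2 * (d:ℝ) := by exact_mod_cast hk2
      linarith
    have hxz : ∀ i, x i ^ k = p i ^ (γ * (k:ℝ)) := by
      intro i
      rw [hx, ← Real.rpow_natCast (p i ^ γ) k, ← Real.rpow_mul (hp0 i)]
    have hyz : ∀ i, y i ^ k = q i ^ (γ * (k:ℝ)) := by
      intro i
      rw [hy, ← Real.rpow_natCast (q i ^ γ) k, ← Real.rpow_mul (hq0 i)]
    simp only [hxz, hyz]
    exact sums_eq hp0 hp1 hq0 hq1 hrank hpur hspread hα0 hα1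
  have hmul := multiset_eq_of_powersums hsupp hpow
  obtain ⟨σ, hσ⟩ := exists_perm_of_multiset_map_eq hmul
  refine ⟨σ, fun i => ?_⟩
  have h1 : q i = y i ^ γ⁻¹ := by rw [hy]; rw [Real.rpow_rpow_inv (hq0 i) hγne]
  have h2 : p (σ i) = x (σ i) ^ γ⁻¹ := by rw [hx]; rw [Real.rpow_rpow_inv (hp0 (σ i)) hγne]
  rw [h1, h2, hσ i]
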